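/- Let G and H be finite simple graphs and k ≥ 2 an integer. If G is regular with degree at least 1, H is regular with degree at least 1, and both G and H admit neighborhood-balanced k-colorings, then the join G + H admits a neighborhood-balanced k-coloring. -/

import Mathlib

open SimpleGraph

/-- A neighborhood-balanced `k`-coloring of a simple graph `G` is a vertex coloring
`c : V → Fin k` such that every vertex has an equal number of neighbors of each color. -/
def IsNBC {V : Type*} (G : SimpleGraph V) (k : ℕ) (c : V → Fin k) : Prop :=
  ∀ v : V, ∀ i j : Fin k,
    {u | G.Adj v u ∧ c u = i}.ncard = {u | G.Adj v u ∧ c u = j}.ncard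


/-- The join `G + H` of simple graphs: disjoint union plus all cross edges. -/
def joinGraph {V W : Type*} (G : SimpleGraph V) (H : SimpleGraph W) :
    SimpleGraph (V ⊕ W) where
  Adj x y := match x, y with
    | Sum.inl a, Sum.inl b => G.Adj a b
    | Sum.inr a, Sum.inr b => H.Adj a b
    | Sum.inl _, Sum.inr _ => True
    | Sum.inr _, Sum.inl _ => True
  symm := by
    constructor
    rintro (a | a) (b | b) h
    · exact G.adj_symm h
    · trivial
    · trivial
    · exact H.adj_symm h
  loopless := by
    constructor
    rintro (a | a) h
    · exact G.irrefl h
    · exact H.irrefl h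


lemma ncard_filter_nbc {V : Type*} [Fintype V] (p : V → Prop) [DecidablePred p] :
    {u | p u}.ncard = (Finset.univ.filter p).card := by
  rw [← Set.ncard_coe_finset]; congr 1; ext; simp

lemma class_card_eq {V : Type*} [Fintype V] (G : SimpleGraph V) [DecidableRel G.Adj]
    (k r : ℕ) (hr : 1 ≤ r) (hreg : G.IsRegularOfDegree r) (c : V → Fin k)
    (hc : IsNBC G k c) (i j : Fin k) :
    {u | c u = i}.ncard = {u | c u = j}.ncard := by
  classical
  have key : ∀ i : Fin k, ∑ v : V, {u | G.Adj v u ∧ c u = i}.ncard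
      = r * {u | c u = i}.ncard := by
    intro i
    have h1 : ∀ v : V, {u | G.Adj v u ∧ c u = i}.ncard
        = ∑ u : V, if G.Adj v u ∧ c u = i then 1 else 0 := by
      intro v
      rw [ncard_filter_nbc (fun u => G.Adj v u ∧ c u = i), Finset.card_filter]
    simp only [h1]
    rw [Finset.sum_comm]
    have h2 : ∀ u : V, (∑ v : V, if G.Adj v u ∧ c u = i then 1 else 0)
        = if c u = i then r else 0 := by
      intro u
      by_cases hcu : c u = i
      · simp only [hcu, and_true, if_true]
        have : (∑ v : V, if G.Adj v u then 1 else 0) = G.degree u := by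
          rw [← Finset.card_filter, SimpleGraph.degree]
          congr 1
          ext v
          simp [adj_comm]
        rw [this, hreg u]
      · simp [hcu]
    simp only [h2]
    rw [Finset.sum_ite, Finset.sum_const_zero, add_zero, Finset.sum_const,
      ncard_filter_nbc (fun u => c u = i), smul_eq_mul, mul_comm]
  have := key i
  rw [Finset.sum_congr rfl (fun v _ => hc v i j), key j] at this
  exact Nat.eq_of_mul_eq_mul_left hr this.symm

lemma set_split_inl {V W : Type*} [Fintype V] [Fintype W]
    (G : SimpleGraph V) (H : SimpleGraph W)
    {k : ℕ} (cG : V → Fin k) (cH : W → Fin k) (a : V) (i : Fin k) :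
    {u : V ⊕ W | (joinGraph G H).Adj (Sum.inl a) u ∧ Sum.elim cG cH u = i}.ncard
      = {b : V | G.Adj a b ∧ cG b = i}.ncard + {w : W | cH w = i}.ncard := by
  have hs : {u : V ⊕ W | (joinGraph G H).Adj (Sum.inl a) u ∧ Sum.elim cG cH u = i}
      = Sum.inl '' {b : V | G.Adj a b ∧ cG b = i} ∪ Sum.inr '' {w : W | cH w = i} := by
    ext (b | w) <;> simp [joinGraph]
  rw [hs, Set.ncard_union_eq ?_ (Set.toFinite _) (Set.toFinite _),
    Set.ncard_image_of_injective _ Sum.inl_injective,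
    Set.ncard_image_of_injective _ Sum.inr_injective]
  exact Set.disjoint_left.2 (by rintro x ⟨b, _, rfl⟩ ⟨w, _, h⟩; exact Sum.inl_ne_inr h.symm)

lemma set_split_inr {V W : Type*} [Fintype V] [Fintype W]
    (G : SimpleGraph V) (H : SimpleGraph W)
    {k : ℕ} (cG : V → Fin k) (cH : W → Fin k) (a : W) (i : Fin k) :
    {u : V ⊕ W | (joinGraph G H).Adj (Sum.inr a) u ∧ Sum.elim cG cH u = i}.ncard
      = {w : W | H.Adj a w ∧ cH w = i}.ncard + {b : V | cG b = i}.ncard := by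
  have hs : {u : V ⊕ W | (joinGraph G H).Adj (Sum.inr a) u ∧ Sum.elim cG cH u = i}
      = Sum.inr '' {w : W | H.Adj a w ∧ cH w = i} ∪ Sum.inl '' {b : V | cG b = i} := by
    ext (b | w) <;> simp [joinGraph]
  rw [hs, Set.ncard_union_eq ?_ (Set.toFinite _) (Set.toFinite _),
    Set.ncard_image_of_injective _ Sum.inl_injective,
    Set.ncard_image_of_injective _ Sum.inr_injective]
  exact Set.disjoint_left.2 (by rintro x ⟨b, _, rfl⟩ ⟨w, _, h⟩; exact Sum.inr_ne_inl h.symm)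

theorem stmt_12 {V W : Type*} [Fintype V] [Fintype W]
    (G : SimpleGraph V) (H : SimpleGraph W) [DecidableRel G.Adj] [DecidableRel H.Adj]
    (k : ℕ) (hk : 2 ≤ k) (rG rH : ℕ) (hrG : 1 ≤ rG) (hrH : 1 ≤ rH)
    (hGreg : G.IsRegularOfDegree rG) (hHreg : H.IsRegularOfDegree rH)
    (hG : ∃ c : V → Fin k, IsNBC G k c) (hH : ∃ c : W → Fin k, IsNBC H k c) :
    ∃ c : V ⊕ W → Fin k, IsNBC (joinGraph G H) k c := by
  obtain ⟨cG, hcG⟩ := hG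
  obtain ⟨cH, hcH⟩ := hH
  refine ⟨Sum.elim cG cH, ?_⟩
  rintro (a | a) i j
  · rw [set_split_inl G H cG cH a i, set_split_inl G H cG cH a j,
      hcG a i j, class_card_eq H k rH hrH hHreg cH hcH i j]
  · rw [set_split_inr G H cG cH a i, set_split_inr G H cG cH a j,
      hcH a i j, class_card_eq G k rG hrG hGreg cG hcG i j]
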